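/- Let Ψ ⊆ ℚ_{>0} be a DCC set with infimum δ > 0, let q' be a positive integer and M ≥ 0 a rational bound. Define Ψ' := { a₀ − Σ_{i=1}^{l} a_i : a₀ ∈ (1/q')ℤ ∩ [0, M], a_i ∈ Ψ, l ≤ M/δ }. Then Ψ' satisfies the ascending chain condition; consequently Ψ ∩ Ψ' is a finite set. -/

import Mathlib

open Pointwise

/-- iterated sumsets of a set -/
def iterSum (Ψ : Set ℚ) : ℕ → Set ℚ
  | 0 => {0}
  | l + 1 => Ψ + iterSum Ψ l

lemma iterSum_isPWO {Ψ : Set ℚ} (h : Ψ.IsPWO) : ∀ l, (iterSum Ψ l).IsPWO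
  | 0 => (Set.finite_singleton 0).isPWO
  | l + 1 => h.add (iterSum_isPWO h l)

lemma sum_mem_iterSum {Ψ : Set ℚ} : ∀ (l : ℕ) (a : Fin l → ℚ), (∀ i, a i ∈ Ψ) →
    ∑ i, a i ∈ iterSum Ψ l
  | 0, a, _ => by simp [iterSum]
  | l + 1, a, ha => by
    rw [Fin.sum_univ_succ]
    exact Set.add_mem_add (ha 0) (sum_mem_iterSum l (fun i => a i.succ) (fun i => ha i.succ))

lemma isPWO_biUnion' {ι : Type*} {f : ι → Set ℚ} {s : Set ι} (hs : s.Finite)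
    (h : ∀ i ∈ s, (f i).IsPWO) : (⋃ i ∈ s, f i).IsPWO := by
  have e : (⋃ i ∈ s, f i) = hs.toFinset.sup f := by
    rw [Finset.sup_set_eq_biUnion]
    simp
  rw [e, Finset.isPWO_sup]
  intro i hi
  exact h i (hs.mem_toFinset.mp hi)

/-- Let `Ψ ⊆ ℚ_{>0}` be a DCC set with infimum `δ > 0`, `q'` a positive integer and `M ≥ 0`
a rational bound.  Let
`Ψ' = { a₀ − Σ_{i=1}^{l} a_i : a₀ ∈ (1/q')ℤ ∩ [0, M], a_i ∈ Ψ, l ≤ M/δ }`.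
Then `Ψ'` satisfies the ascending chain condition, and consequently `Ψ ∩ Ψ'` is finite. -/
theorem acc_of_dcc_sums (Ψ : Set ℚ) (hpos : ∀ a ∈ Ψ, 0 < a)
    (hDCC : ¬ ∃ f : ℕ → ℚ, (∀ n, f n ∈ Ψ) ∧ StrictAnti f)
    (δ : ℚ) (hδpos : 0 < δ) (hglb : IsGLB Ψ δ)
    (q' : ℕ) (hq' : 0 < q') (M : ℚ) (hM : 0 ≤ M)
    (Ψ' : Set ℚ)
    (hΨ' : Ψ' = { x : ℚ | ∃ (a₀ : ℚ) (l : ℕ) (a : Fin l → ℚ),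
        (∃ n : ℤ, a₀ = (n : ℚ) / (q' : ℚ)) ∧ 0 ≤ a₀ ∧ a₀ ≤ M ∧
        (∀ i, a i ∈ Ψ) ∧ (l : ℚ) ≤ M / δ ∧ x = a₀ - ∑ i, a i }) :
    (¬ ∃ f : ℕ → ℚ, (∀ n, f n ∈ Ψ') ∧ StrictMono f) ∧ (Ψ ∩ Ψ').Finite := by
  -- Ψ is well-founded
  have hΨwf : Ψ.IsWF := by
    rw [Set.isWF_iff_no_descending_seq]
    intro f hf hmem
    exact hDCC ⟨f, fun n => hmem n, hf⟩
  have hΨpwo : Ψ.IsPWO := hΨwf.isPWO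
  -- the finite set of possible a₀'s
  set S : Set ℚ := {x : ℚ | (∃ n : ℤ, x = (n : ℚ) / (q' : ℚ)) ∧ 0 ≤ x ∧ x ≤ M} with hS
  have hq'Q : (0 : ℚ) < (q' : ℚ) := by exact_mod_cast hq'
  have hSfin : S.Finite := by
    have : S ⊆ (fun n : ℤ => (n : ℚ) / (q' : ℚ)) '' (Set.Icc 0 ⌈M * q'⌉) := by
      rintro x ⟨⟨n, rfl⟩, hx0, hxM⟩
      refine ⟨n, ⟨?_, ?_⟩, rfl⟩
      · have : (0 : ℚ) ≤ (n : ℚ) := by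
          have := mul_le_mul_of_nonneg_right hx0 hq'Q.le
          rwa [div_mul_cancel₀ _ hq'Q.ne', zero_mul] at this
        exact_mod_cast this
      · have h1 : (n : ℚ) ≤ M * q' := by
          have := mul_le_mul_of_nonneg_right hxM hq'Q.le
          rwa [div_mul_cancel₀ _ hq'Q.ne'] at this
        exact_mod_cast h1.trans (Int.le_ceil _)
    exact ((Set.finite_Icc _ _).image _).subset this
  -- bound on l
  set L : ℕ := ⌊M / δ⌋.toNat with hL
  -- the "negated Ψ'" is contained in a PWO set
  set U : Set ℚ := ⋃ s ∈ S, ⋃ l ∈ Set.Iic L, (iterSum Ψ l) + {-s} with hU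
  have hUpwo : U.IsPWO := by
    apply isPWO_biUnion' hSfin
    intro s _
    apply isPWO_biUnion' (Set.finite_Iic L)
    intro l _
    exact (iterSum_isPWO hΨpwo l).add (Set.isPWO_singleton _)
  have hneg : ∀ x ∈ Ψ', -x ∈ U := by
    intro x hx
    rw [hΨ'] at hx
    obtain ⟨a₀, l, a, ha₀, h0, hMa, haΨ, hlM, rfl⟩ := hx
    have hlL : l ≤ L := by
      have h1 : (l : ℤ) ≤ ⌊M / δ⌋ := Int.le_floor.mpr (by exact_mod_cast hlM)
      omega
    refine Set.mem_biUnion ⟨ha₀, h0, hMa⟩ (Set.mem_biUnion hlL ?_)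
    have : -(a₀ - ∑ i, a i) = (∑ i, a i) + (-a₀) := by ring
    rw [this]
    exact Set.add_mem_add (sum_mem_iterSum l a haΨ) rfl
  have hACC : ¬ ∃ f : ℕ → ℚ, (∀ n, f n ∈ Ψ') ∧ StrictMono f := by
    rintro ⟨f, hf, hmono⟩
    have hUwf := hUpwo.isWF
    rw [Set.isWF_iff_no_descending_seq] at hUwf
    exact hUwf (fun n => -(f n)) (fun m n h => neg_lt_neg (hmono h)) (fun n => hneg _ (hf n))
  refine ⟨hACC, ?_⟩
  by_contra hinf
  have hinf' : (Ψ ∩ Ψ').Infinite := hinf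
  set e := hinf'.natEmbedding _ with he
  set f : ℕ → ℚ := fun n => (e n : ℚ) with hfdef
  obtain ⟨g, hg⟩ := hΨpwo.exists_monotone_subseq (fun n => (e n).2.1 : ∀ n, f n ∈ Ψ)
  have hinj : Function.Injective (f ∘ g) := fun a b hab => by
    have := e.injective (Subtype.ext hab)
    exact g.injective this
  exact hACC ⟨f ∘ g, fun n => (e (g n)).2.2, hg.strictMono_of_injective hinj⟩
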